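/- Let A be an n×m real matrix with no zero rows and no zero columns, and let w ∈ ℝⁿ and v ∈ ℝ^m have strictly positive entries. Then there exist sequences of multiplicities k_N : Fin n → ℕ₊ and l_N : Fin m → ℕ₊ (N ∈ ℕ) such that, denoting by A'_N the split matrix of A with multiplicities k_N and l_N and by n'_N, m'_N its numbers of rows and columns, the sequence √(n'_N·m'_N)·‖A'_N‖ converges to ‖Ã‖·‖w‖·‖v‖ as N → ∞, where Ã is the n×m matrix with entries ã_{ij} = a_{ij}/(w_i·v_j) and ‖·‖ is the ℓ²→ℓ² operator norm. -/

import Mathlib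

open scoped BigOperators

/-- The ℓ²→ℓ² operator norm of a real matrix. -/
noncomputable def l2OpNorm {α β : Type*} [Fintype α] [Fintype β] [DecidableEq β]
    (A : Matrix α β ℝ) : ℝ :=
  ‖LinearMap.toContinuousLinearMap (Matrix.toEuclideanLin A)‖

/-- The ∞→1 norm of a real matrix: `max_{x ∈ {-1,1}ⁿ, y ∈ {-1,1}^m} xᵀ A y`. -/
noncomputable def normInftyOne {α β : Type*} [Fintype α] [Fintype β] (A : Matrix α β ℝ) : ℝ :=
  ⨆ p : (α → Bool) × (β → Bool),
    ∑ i, ∑ j, (if p.1 i then (1:ℝ) else -1) * A i j * (if p.2 j then (1:ℝ) else -1)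

/-- The Grothendieck norm: sup over `k` and families of unit vectors of `Σ a_{ij} ⟨p_i, q_j⟩`. -/
noncomputable def grothendieckNorm {α β : Type*} [Fintype α] [Fintype β]
    (A : Matrix α β ℝ) : ℝ :=
  sSup { r : ℝ | ∃ (k : ℕ) (p : α → EuclideanSpace ℝ (Fin k)) (q : β → EuclideanSpace ℝ (Fin k)),
    (∀ i, ‖p i‖ = 1) ∧ (∀ j, ‖q j‖ = 1) ∧
    r = ∑ i, ∑ j, A i j * (inner ℝ (p i) (q j) : ℝ) }

/-- The matrix obtained from `A` by splitting row `i` into `k i` equal rows and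
column `j` into `l j` equal columns. -/
noncomputable def splitMatrix {n m : ℕ} (A : Matrix (Fin n) (Fin m) ℝ)
    (k : Fin n → ℕ+) (l : Fin m → ℕ+) :
    Matrix ((i : Fin n) × Fin (k i : ℕ)) ((j : Fin m) × Fin (l j : ℕ)) ℝ :=
  fun p q => A p.1 q.1 / (((k p.1 : ℕ) : ℝ) * ((l q.1 : ℕ) : ℝ))


section AuxSplit

open Matrix

/-- The isometric "splitting" embedding matrix. -/
noncomputable def embMat {r : ℕ} (c : Fin r → ℕ+) :
    Matrix ((i : Fin r) × Fin (c i : ℕ)) (Fin r) ℝ :=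
  fun p i' => if p.1 = i' then 1 / Real.sqrt ((c p.1 : ℕ) : ℝ) else 0

lemma sum_sigma_eq {r : ℕ} (c : Fin r → ℕ+) (f : ((i : Fin r) × Fin (c i : ℕ)) → ℝ) :
    ∑ p : (i : Fin r) × Fin (c i : ℕ), f p = ∑ i, ∑ s : Fin (c i : ℕ), f ⟨i, s⟩ := by
  rw [← Finset.univ_sigma_univ, Finset.sum_sigma]

lemma embMat_mulVec {r : ℕ} (c : Fin r → ℕ+) (x : Fin r → ℝ) (p) :
    (embMat c *ᵥ x) p = x p.1 / Real.sqrt ((c p.1 : ℕ) : ℝ) := by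
  simp [embMat, Matrix.mulVec, dotProduct, ite_mul, div_mul_eq_mul_div, one_mul,
    inv_mul_eq_div]

lemma embMat_norm_map {r : ℕ} (c : Fin r → ℕ+) (x : EuclideanSpace ℝ (Fin r)) :
    ‖Matrix.toEuclideanLin (embMat c) x‖ = ‖x‖ := by
  rw [EuclideanSpace.norm_eq, EuclideanSpace.norm_eq]
  congr 1
  have : ∀ p, (Matrix.toEuclideanLin (embMat c) x) p = x p.1 / Real.sqrt ((c p.1 : ℕ) : ℝ) := by
    intro p
    rw [Matrix.toEuclideanLin_apply]
    exact embMat_mulVec c _ p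
  simp only [this]
  rw [sum_sigma_eq]
  congr 1
  ext i
  have hc : (0:ℝ) < ((c i : ℕ) : ℝ) := by exact_mod_cast (c i).pos
  simp only [Real.norm_eq_abs, sq_abs, div_pow, Real.sq_sqrt hc.le]
  rw [Finset.sum_const, Finset.card_univ, Fintype.card_fin, nsmul_eq_mul]
  field_simp

section ScopedNorm

open scoped Matrix.Norms.L2Operator

lemma l2OpNorm_eq_norm {α β : Type*} [Fintype α] [Fintype β] [DecidableEq β]
    (A : Matrix α β ℝ) : l2OpNorm A = ‖A‖ := rfl

lemma embMat_norm_le {r : ℕ} (c : Fin r → ℕ+) : ‖embMat c‖ ≤ 1 := by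
  rw [Matrix.l2_opNorm_def]
  exact ContinuousLinearMap.opNorm_le_bound _ zero_le_one
    (fun x => by simp [embMat_norm_map c x])

lemma embMat_transpose_norm_le {r : ℕ} (c : Fin r → ℕ+) : ‖(embMat c)ᵀ‖ ≤ 1 := by
  rw [show (embMat c)ᵀ = (embMat c)ᴴ from rfl, Matrix.l2_opNorm_conjTranspose]
  exact embMat_norm_le c

lemma split_eq {n m : ℕ} (A : Matrix (Fin n) (Fin m) ℝ) (k : Fin n → ℕ+) (l : Fin m → ℕ+) :
    splitMatrix A k l = embMat k *
      (Matrix.of (fun i j => A i j / (Real.sqrt ((k i : ℕ) : ℝ) * Real.sqrt ((l j : ℕ) : ℝ)))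
        * (embMat l)ᵀ) := by
  ext p q
  have hk : (0:ℝ) < Real.sqrt ((k p.1 : ℕ) : ℝ) := Real.sqrt_pos.2 (by exact_mod_cast (k p.1).pos)
  have hl : (0:ℝ) < Real.sqrt ((l q.1 : ℕ) : ℝ) := Real.sqrt_pos.2 (by exact_mod_cast (l q.1).pos)
  simp only [Matrix.mul_apply, Matrix.transpose_apply, Matrix.of_apply, embMat, splitMatrix,
    ite_mul, mul_ite, zero_mul, mul_zero, Finset.sum_ite_eq, Finset.mem_univ, if_true]
  rw [div_mul_div_comm, div_mul_div_comm, one_mul, mul_one]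
  congr 1
  have h1 : Real.sqrt ((k p.1 : ℕ) : ℝ) * (Real.sqrt ((k p.1 : ℕ) : ℝ) * Real.sqrt ((l q.1 : ℕ) : ℝ) * Real.sqrt ((l q.1 : ℕ) : ℝ))
      = (Real.sqrt ((k p.1 : ℕ) : ℝ) * Real.sqrt ((k p.1 : ℕ) : ℝ)) * (Real.sqrt ((l q.1 : ℕ) : ℝ) * Real.sqrt ((l q.1 : ℕ) : ℝ)) := by ring
  rw [h1, Real.mul_self_sqrt (by positivity), Real.mul_self_sqrt (by positivity)]

lemma split_eq' {n m : ℕ} (A : Matrix (Fin n) (Fin m) ℝ) (k : Fin n → ℕ+) (l : Fin m → ℕ+) :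
    Matrix.of (fun i j => A i j / (Real.sqrt ((k i : ℕ) : ℝ) * Real.sqrt ((l j : ℕ) : ℝ)))
      = (embMat k)ᵀ * (splitMatrix A k l * embMat l) := by
  ext i j
  simp only [Matrix.mul_apply, Matrix.transpose_apply, Matrix.of_apply, embMat, splitMatrix,
    ite_mul, mul_ite, zero_mul, mul_zero]
  have hk0 : ((k i : ℕ) : ℝ) ≠ 0 := by positivity
  have hl0 : ((l j : ℕ) : ℝ) ≠ 0 := by positivity
  have hsk : Real.sqrt ((k i : ℕ) : ℝ) ≠ 0 := by positivity
  have hsl : Real.sqrt ((l j : ℕ) : ℝ) ≠ 0 := by positivity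
  simp only [sum_sigma_eq, Finset.sum_const, Finset.card_univ, Fintype.card_fin, nsmul_eq_mul,
    mul_ite, mul_zero, ite_mul, zero_mul, Finset.sum_ite_eq', Finset.mem_univ, if_true]
  field_simp

lemma l2OpNorm_splitMatrix {n m : ℕ} (A : Matrix (Fin n) (Fin m) ℝ)
    (k : Fin n → ℕ+) (l : Fin m → ℕ+) :
    l2OpNorm (splitMatrix A k l) =
      l2OpNorm (Matrix.of (fun i j =>
        A i j / (Real.sqrt ((k i : ℕ) : ℝ) * Real.sqrt ((l j : ℕ) : ℝ)))) := by
  rw [l2OpNorm_eq_norm, l2OpNorm_eq_norm]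
  set B := Matrix.of (fun i j =>
    A i j / (Real.sqrt ((k i : ℕ) : ℝ) * Real.sqrt ((l j : ℕ) : ℝ))) with hB
  apply le_antisymm
  · rw [split_eq A k l]
    have e1 := Matrix.l2_opNorm_mul (embMat k) (B * (embMat l)ᵀ)
    have e2 := Matrix.l2_opNorm_mul B (embMat l)ᵀ
    have e3 := embMat_norm_le k
    have e4 := embMat_transpose_norm_le l
    nlinarith [norm_nonneg (B * (embMat l)ᵀ), norm_nonneg (embMat k), norm_nonneg B,
      norm_nonneg ((embMat l)ᵀ)]
  · conv_lhs => rw [hB, split_eq' A k l]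
    have e1 := Matrix.l2_opNorm_mul (embMat k)ᵀ (splitMatrix A k l * embMat l)
    have e2 := Matrix.l2_opNorm_mul (splitMatrix A k l) (embMat l)
    have e3 := embMat_transpose_norm_le k
    have e4 := embMat_norm_le l
    nlinarith [norm_nonneg (splitMatrix A k l * embMat l), norm_nonneg ((embMat k)ᵀ),
      norm_nonneg (splitMatrix A k l), norm_nonneg (embMat l)]

lemma l2OpNorm_smul {α β : Type*} [Fintype α] [Fintype β] [DecidableEq β]
    (c : ℝ) (hc : 0 ≤ c) (A : Matrix α β ℝ) : l2OpNorm (c • A) = c * l2OpNorm A := by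
  rw [l2OpNorm_eq_norm, l2OpNorm_eq_norm, norm_smul]
  simp [abs_of_nonneg hc]

end ScopedNorm

lemma continuous_l2OpNorm (n m : ℕ) :
    Continuous fun A : Matrix (Fin n) (Fin m) ℝ => l2OpNorm A := by
  have h : (fun A : Matrix (Fin n) (Fin m) ℝ => l2OpNorm A) = fun A =>
      ‖((Matrix.toEuclideanLin.trans LinearMap.toContinuousLinearMap).toLinearMap :
        Matrix (Fin n) (Fin m) ℝ →ₗ[ℝ]
          (EuclideanSpace ℝ (Fin m) →L[ℝ] EuclideanSpace ℝ (Fin n))) A‖ := rfl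
  rw [h]
  exact (LinearMap.continuous_of_finiteDimensional _).norm

lemma ceil_div_tendsto (a : ℝ) (ha : 0 ≤ a) :
    Filter.Tendsto (fun N : ℕ => ((⌈(N:ℝ) * a⌉₊ + 1 : ℕ) : ℝ) / N) Filter.atTop (nhds a) := by
  have h1 : Filter.Tendsto (fun N : ℕ => a + 2 / (N:ℝ)) Filter.atTop (nhds a) := by
    have := Filter.Tendsto.add (tendsto_const_nhds (x := a))
      (Filter.Tendsto.div_atTop (tendsto_const_nhds (x := (2:ℝ)))
        tendsto_natCast_atTop_atTop)
    simpa using this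
  apply tendsto_of_tendsto_of_tendsto_of_le_of_le' tendsto_const_nhds h1
  · filter_upwards [Filter.eventually_ge_atTop 1] with N hN
    have hN' : (0:ℝ) < N := by exact_mod_cast hN
    rw [le_div_iff₀ hN']
    have h2 := Nat.le_ceil ((N:ℝ) * a)
    push_cast
    nlinarith
  · filter_upwards [Filter.eventually_ge_atTop 1] with N hN
    have hN' : (0:ℝ) < N := by exact_mod_cast hN
    rw [div_le_iff₀ hN', add_mul, div_mul_cancel₀ _ hN'.ne']
    have h2 := Nat.ceil_lt_add_one (by positivity : (0:ℝ) ≤ (N:ℝ) * a)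
    push_cast
    nlinarith

end AuxSplit

/-- For arbitrary positive weights `w, v` there are sequences of splittings
`A'_N` with `√(n'_N·m'_N)·‖A'_N‖ → ‖Ã‖·‖w‖·‖v‖`, where `ã_{ij} = a_{ij}/(w_i·v_j)`. -/
theorem splitting_approximates_weights (n m : ℕ) (A : Matrix (Fin n) (Fin m) ℝ)
    (hrow : ∀ i, ∃ j, A i j ≠ 0) (hcol : ∀ j, ∃ i, A i j ≠ 0)
    (w : Fin n → ℝ) (v : Fin m → ℝ)
    (hw : ∀ i, 0 < w i) (hv : ∀ j, 0 < v j)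
    (Atil : Matrix (Fin n) (Fin m) ℝ)
    (hAtil : ∀ i j, Atil i j = A i j / (w i * v j)) :
    ∃ (k : ℕ → Fin n → ℕ+) (l : ℕ → Fin m → ℕ+),
      Filter.Tendsto
        (fun N => Real.sqrt ((∑ i, ((k N i : ℕ) : ℝ)) * (∑ j, ((l N j : ℕ) : ℝ))) *
          l2OpNorm (splitMatrix A (k N) (l N)))
        Filter.atTop
        (nhds (l2OpNorm Atil * Real.sqrt (∑ i, w i ^ 2) * Real.sqrt (∑ j, v j ^ 2))) := by
  classical
  set k : ℕ → Fin n → ℕ+ := fun N i => ⟨⌈(N:ℝ) * w i ^ 2⌉₊ + 1, Nat.succ_pos _⟩ with hkdef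
  set l : ℕ → Fin m → ℕ+ := fun N j => ⟨⌈(N:ℝ) * v j ^ 2⌉₊ + 1, Nat.succ_pos _⟩ with hldef
  refine ⟨k, l, ?_⟩
  set S : ℕ → ℝ := fun N => ∑ i, ((k N i : ℕ) : ℝ) with hSdef
  set T : ℕ → ℝ := fun N => ∑ j, ((l N j : ℕ) : ℝ) with hTdef
  have hki : ∀ i, Filter.Tendsto (fun N : ℕ => ((k N i : ℕ) : ℝ) / N)
      Filter.atTop (nhds (w i ^ 2)) := fun i => ceil_div_tendsto (w i ^ 2) (sq_nonneg _)
  have hlj : ∀ j, Filter.Tendsto (fun N : ℕ => ((l N j : ℕ) : ℝ) / N)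
      Filter.atTop (nhds (v j ^ 2)) := fun j => ceil_div_tendsto (v j ^ 2) (sq_nonneg _)
  have hS : Filter.Tendsto (fun N => S N / N) Filter.atTop (nhds (∑ i, w i ^ 2)) := by
    simpa only [hSdef, Finset.sum_div] using
      tendsto_finset_sum Finset.univ (fun i (_ : i ∈ Finset.univ) => hki i)
  have hT : Filter.Tendsto (fun N => T N / N) Filter.atTop (nhds (∑ j, v j ^ 2)) := by
    simpa only [hTdef, Finset.sum_div] using
      tendsto_finset_sum Finset.univ (fun j (_ : j ∈ Finset.univ) => hlj j)
  have key : ∀ i j, Filter.Tendsto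
      (fun N => Real.sqrt (S N * T N) *
        (A i j / (Real.sqrt ((k N i : ℕ) : ℝ) * Real.sqrt ((l N j : ℕ) : ℝ))))
      Filter.atTop
      (nhds ((Real.sqrt (∑ i, w i ^ 2) * Real.sqrt (∑ j, v j ^ 2)) * Atil i j)) := by
    intro i j
    have hwi := hw i
    have hvj := hv j
    have t1 : Filter.Tendsto
        (fun N => Real.sqrt (S N / N) / Real.sqrt (((k N i : ℕ) : ℝ) / N))
        Filter.atTop (nhds (Real.sqrt (∑ i, w i ^ 2) / w i)) := by
      have := hS.sqrt.div (hki i).sqrt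
        (by rw [Real.sqrt_sq hwi.le]; exact hwi.ne')
      rwa [Real.sqrt_sq hwi.le] at this
    have t2 : Filter.Tendsto
        (fun N => Real.sqrt (T N / N) / Real.sqrt (((l N j : ℕ) : ℝ) / N))
        Filter.atTop (nhds (Real.sqrt (∑ j, v j ^ 2) / v j)) := by
      have := hT.sqrt.div (hlj j).sqrt
        (by rw [Real.sqrt_sq hvj.le]; exact hvj.ne')
      rwa [Real.sqrt_sq hvj.le] at this
    have t3 := (t1.mul t2).mul_const (A i j)
    have hval : (Real.sqrt (∑ i, w i ^ 2) / w i * (Real.sqrt (∑ j, v j ^ 2) / v j)) * A i j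
        = (Real.sqrt (∑ i, w i ^ 2) * Real.sqrt (∑ j, v j ^ 2)) * Atil i j := by
      rw [hAtil i j]
      field_simp
    rw [hval] at t3
    apply t3.congr'
    filter_upwards [Filter.eventually_ge_atTop 1] with N hN
    have hN' : (0:ℝ) < N := by exact_mod_cast hN
    have hkpos : (0:ℝ) < ((k N i : ℕ) : ℝ) := by exact_mod_cast (k N i).pos
    have hlpos : (0:ℝ) < ((l N j : ℕ) : ℝ) := by exact_mod_cast (l N j).pos
    have hSpos : (0:ℝ) < S N := Finset.sum_pos
      (fun i' _ => by exact_mod_cast (k N i').pos) ⟨i, Finset.mem_univ i⟩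
    have hTpos : (0:ℝ) < T N := Finset.sum_pos
      (fun j' _ => by exact_mod_cast (l N j').pos) ⟨j, Finset.mem_univ j⟩
    have hsk : (0:ℝ) < Real.sqrt ((k N i : ℕ) : ℝ) := Real.sqrt_pos.2 hkpos
    have hsl : (0:ℝ) < Real.sqrt ((l N j : ℕ) : ℝ) := Real.sqrt_pos.2 hlpos
    have hsN : (0:ℝ) < Real.sqrt N := Real.sqrt_pos.2 hN'
    rw [Real.sqrt_div hSpos.le, Real.sqrt_div hTpos.le, Real.sqrt_div hkpos.le,
      Real.sqrt_div hlpos.le, Real.sqrt_mul hSpos.le]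
    field_simp
  have hmat : Filter.Tendsto
      (fun N => Real.sqrt (S N * T N) • Matrix.of (fun i j =>
        A i j / (Real.sqrt ((k N i : ℕ) : ℝ) * Real.sqrt ((l N j : ℕ) : ℝ))))
      Filter.atTop
      (nhds ((Real.sqrt (∑ i, w i ^ 2) * Real.sqrt (∑ j, v j ^ 2)) • Atil)) := by
    apply tendsto_pi_nhds.2
    intro i
    rw [tendsto_pi_nhds]
    intro j
    simpa [Matrix.smul_apply, Matrix.of_apply] using key i j
  have hcomp := ((continuous_l2OpNorm n m).tendsto _).comp hmat
  have hlim : l2OpNorm ((Real.sqrt (∑ i, w i ^ 2) * Real.sqrt (∑ j, v j ^ 2)) • Atil)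
      = l2OpNorm Atil * Real.sqrt (∑ i, w i ^ 2) * Real.sqrt (∑ j, v j ^ 2) := by
    rw [l2OpNorm_smul _ (by positivity)]
    ring
  rw [← hlim]
  apply Filter.Tendsto.congr _ hcomp
  intro N
  show l2OpNorm _ = _
  rw [l2OpNorm_smul _ (Real.sqrt_nonneg _), l2OpNorm_splitMatrix]
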